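/- For n ≥ 3 and s ∈ ℕ, the probability that the Erdős–Rényi random graph G(n, 1/2) contains a clique or an independent set of size t = ⌈3·log₂ n + √(2s)⌉ is at most 2^{−s}. -/

import Mathlib

open Finset

open scoped Classical in
lemma count_superset_graphs {V : Type*} [Fintype V] [DecidableEq V] (Q : Finset (Sym2 V))
    (hQ : ∀ e ∈ Q, ¬ e.IsDiag) :
    (univ.filter (fun G : SimpleGraph V => ∀ e ∈ Q, e ∈ G.edgeSet)).card ≤
      2 ^ ((Fintype.card V).choose 2 - Q.card) := by
  classical
  set U : Finset (Sym2 V) := univ.filter (fun e => ¬ e.IsDiag) with hUdef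
  have hQU : Q ⊆ U := fun e he => mem_filter.2 ⟨mem_univ _, hQ e he⟩
  have hU : U.card = (Fintype.card V).choose 2 := by
    rw [← Sym2.card_subtype_not_diag]
    simp [hUdef, Fintype.card_subtype]
  have key : (univ.filter (fun G : SimpleGraph V => ∀ e ∈ Q, e ∈ G.edgeSet)).card ≤
      ((U \ Q).powerset).card := by
    apply Finset.card_le_card_of_injOn
      (fun G => (U.filter (fun e => e ∈ G.edgeSet)) \ Q)
    · intro G _
      simp only [Finset.mem_coe, Finset.mem_powerset]
      exact sdiff_subset_sdiff (filter_subset _ _) le_rfl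
    · intro G hG G' hG' hEq
      simp only [coe_filter, Set.mem_setOf_eq, mem_univ, true_and] at hG hG'
      simp only at hEq
      have hFF : U.filter (fun e => e ∈ G.edgeSet) = U.filter (fun e => e ∈ G'.edgeSet) := by
        ext e
        by_cases heQ : e ∈ Q
        · simp only [mem_filter]
          exact ⟨fun _ => ⟨hQU heQ, hG' e heQ⟩, fun _ => ⟨hQU heQ, hG e heQ⟩⟩
        · constructor
          · intro h
            have : e ∈ U.filter (fun e => e ∈ G.edgeSet) \ Q := mem_sdiff.2 ⟨h, heQ⟩
            rw [hEq] at this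
            exact (mem_sdiff.1 this).1
          · intro h
            have : e ∈ U.filter (fun e => e ∈ G'.edgeSet) \ Q := mem_sdiff.2 ⟨h, heQ⟩
            rw [← hEq] at this
            exact (mem_sdiff.1 this).1
      ext u v
      constructor
      · intro h
        have hmem : s(u, v) ∈ U.filter (fun e => e ∈ G.edgeSet) := by
          refine mem_filter.2 ⟨mem_filter.2 ⟨mem_univ _, ?_⟩, h⟩
          simpa using G.ne_of_adj h
        rw [hFF] at hmem
        exact (mem_filter.1 hmem).2
      · intro h
        have hmem : s(u, v) ∈ U.filter (fun e => e ∈ G'.edgeSet) := by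
          refine mem_filter.2 ⟨mem_filter.2 ⟨mem_univ _, ?_⟩, h⟩
          simpa using G'.ne_of_adj h
        rw [← hFF] at hmem
        exact (mem_filter.1 hmem).2
  calc (univ.filter (fun G : SimpleGraph V => ∀ e ∈ Q, e ∈ G.edgeSet)).card
      ≤ ((U \ Q).powerset).card := key
    _ = 2 ^ ((Fintype.card V).choose 2 - Q.card) := by
        rw [Finset.card_powerset, Finset.card_sdiff_of_subset hQU, hU]

open scoped Classical in
lemma bad_count (n t : ℕ) :
    (univ.filter (fun G : SimpleGraph (Fin n) => ∃ S : Finset (Fin n), S.card = t ∧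
        (G.IsClique ↑S ∨ (↑S : Set (Fin n)).Pairwise fun u v => ¬ G.Adj u v))).card ≤
      n.choose t * (2 * 2 ^ (n.choose 2 - t.choose 2)) := by
  classical
  set Q : Finset (Fin n) → Finset (Sym2 (Fin n)) := fun S => S.offDiag.image Sym2.mk.uncurry with hQdef
  have hQdiag : ∀ S, ∀ e ∈ Q S, ¬ e.IsDiag := by
    intro S e he
    simp only [hQdef, Finset.mem_image, Finset.mem_offDiag] at he
    obtain ⟨⟨a, b⟩, ⟨_, _, hab⟩, rfl⟩ := he
    simpa using hab
  have hQcard : ∀ S : Finset (Fin n), S.card = t → (Q S).card = t.choose 2 := by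
    intro S hS
    rw [hQdef]
    rw [Sym2.card_image_offDiag, hS]
  have hsub : (univ.filter (fun G : SimpleGraph (Fin n) => ∃ S : Finset (Fin n), S.card = t ∧
        (G.IsClique ↑S ∨ (↑S : Set (Fin n)).Pairwise fun u v => ¬ G.Adj u v))) ⊆
      (univ.powersetCard t).biUnion (fun S =>
        univ.filter (fun G : SimpleGraph (Fin n) => ∀ e ∈ Q S, e ∈ G.edgeSet) ∪
        univ.filter (fun G : SimpleGraph (Fin n) => ∀ e ∈ Q S, e ∈ Gᶜ.edgeSet)) := by
    intro G hG
    simp only [mem_filter, mem_univ, true_and] at hG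
    obtain ⟨S, hS, hc⟩ := hG
    refine Finset.mem_biUnion.2 ⟨S, Finset.mem_powersetCard_univ.2 hS, ?_⟩
    rcases hc with hc | hc
    · apply Finset.mem_union_left
      refine mem_filter.2 ⟨mem_univ _, ?_⟩
      intro e he
      simp only [hQdef, Finset.mem_image, Finset.mem_offDiag] at he
      obtain ⟨⟨a, b⟩, ⟨ha, hb, hab⟩, rfl⟩ := he
      exact (SimpleGraph.mem_edgeSet G).2 (hc ha hb hab)
    · apply Finset.mem_union_right
      refine mem_filter.2 ⟨mem_univ _, ?_⟩
      intro e he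
      simp only [hQdef, Finset.mem_image, Finset.mem_offDiag] at he
      obtain ⟨⟨a, b⟩, ⟨ha, hb, hab⟩, rfl⟩ := he
      rw [Function.uncurry_apply_pair, SimpleGraph.mem_edgeSet, SimpleGraph.compl_adj]
      exact ⟨hab, hc ha hb hab⟩
  have hcompl : ∀ S : Finset (Fin n),
      (univ.filter (fun G : SimpleGraph (Fin n) => ∀ e ∈ Q S, e ∈ Gᶜ.edgeSet)).card =
      (univ.filter (fun G : SimpleGraph (Fin n) => ∀ e ∈ Q S, e ∈ G.edgeSet)).card := by
    intro S
    apply Finset.card_bij' (fun G _ => Gᶜ) (fun G _ => Gᶜ)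
    · intro G _; simp
    · intro G _; simp
    · intro G hG
      simp only [mem_filter, mem_univ, true_and] at hG ⊢
      exact hG
    · intro G hG
      simp only [mem_filter, mem_univ, true_and] at hG ⊢
      simpa using hG
  calc _ ≤ ((univ.powersetCard t).biUnion (fun S =>
        univ.filter (fun G : SimpleGraph (Fin n) => ∀ e ∈ Q S, e ∈ G.edgeSet) ∪
        univ.filter (fun G : SimpleGraph (Fin n) => ∀ e ∈ Q S, e ∈ Gᶜ.edgeSet))).card :=
      Finset.card_le_card hsub
    _ ≤ ∑ S ∈ univ.powersetCard t, ((univ.filter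
          (fun G : SimpleGraph (Fin n) => ∀ e ∈ Q S, e ∈ G.edgeSet)) ∪
        univ.filter (fun G : SimpleGraph (Fin n) => ∀ e ∈ Q S, e ∈ Gᶜ.edgeSet)).card :=
      Finset.card_biUnion_le
    _ ≤ ∑ _S ∈ univ.powersetCard t, (2 * 2 ^ (n.choose 2 - t.choose 2)) := by
      apply Finset.sum_le_sum
      intro S hS
      have hSc : S.card = t := Finset.mem_powersetCard_univ.1 hS
      have h1 := count_superset_graphs (Q S) (hQdiag S)
      rw [hQcard S hSc, Fintype.card_fin] at h1
      calc _ ≤ (univ.filter (fun G : SimpleGraph (Fin n) => ∀ e ∈ Q S, e ∈ G.edgeSet)).card +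
            (univ.filter (fun G : SimpleGraph (Fin n) => ∀ e ∈ Q S, e ∈ Gᶜ.edgeSet)).card :=
          Finset.card_union_le _ _
        _ ≤ _ := by rw [hcompl S, two_mul]; exact Nat.add_le_add h1 h1
    _ = n.choose t * (2 * 2 ^ (n.choose 2 - t.choose 2)) := by
      rw [Finset.sum_const, Finset.card_powersetCard, Finset.card_univ, Fintype.card_fin,
        smul_eq_mul]

lemma two_mul_choose_two (m : ℕ) : 2 * ((m + 1).choose 2) = (m + 1) * m := by
  rw [Nat.choose_two_right, Nat.succ_sub_one, Nat.mul_div_cancel']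
  rw [mul_comm]
  exact (Nat.even_mul_succ_self m).two_dvd

theorem erdos_renyi_clique_indep (n : ℕ) (hn : 3 ≤ n) (s : ℕ) (t : ℕ)
    (ht : t = (⌈3 * Real.logb 2 n + Real.sqrt (2 * s)⌉).toNat) :
    (Nat.card {G : SimpleGraph (Fin n) | ∃ S : Finset (Fin n), S.card = t ∧
        (G.IsClique ↑S ∨ (↑S : Set (Fin n)).Pairwise fun u v => ¬ G.Adj u v)} : ℝ) /
      2 ^ (n.choose 2) ≤ (2 : ℝ) ^ (-(s : ℝ)) := by
  classical
  set B := {G : SimpleGraph (Fin n) | ∃ S : Finset (Fin n), S.card = t ∧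
      (G.IsClique ↑S ∨ (↑S : Set (Fin n)).Pairwise fun u v => ¬ G.Adj u v)} with hBdef
  -- cardinality bound
  have hcard : Nat.card B ≤ n.choose t * (2 * 2 ^ (n.choose 2 - t.choose 2)) := by
    have h1 : Nat.card B = (univ.filter (fun G : SimpleGraph (Fin n) =>
        ∃ S : Finset (Fin n), S.card = t ∧
        (G.IsClique ↑S ∨ (↑S : Set (Fin n)).Pairwise fun u v => ¬ G.Adj u v))).card := by
      rw [Nat.card_coe_set_eq, ← Set.ncard_coe_finset]
      congr 1
      ext G
      simp [hBdef]
    rw [h1]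
    exact bad_count n t
  -- basic real facts
  have hn0 : (0 : ℝ) < n := by positivity
  set L := Real.logb 2 n with hLdef
  have hL : (3 / 2 : ℝ) ≤ L := by
    have h32 : (3 / 2 : ℝ) ≤ Real.logb 2 3 := by
      rw [Real.le_logb_iff_rpow_le one_lt_two (by norm_num)]
      have h8 : ((2 : ℝ) ^ ((3 : ℝ) / 2)) ^ 2 = 8 := by
        rw [← Real.rpow_natCast ((2 : ℝ) ^ ((3 : ℝ) / 2)) 2,
          ← Real.rpow_mul (by norm_num : (0:ℝ) ≤ 2)]
        norm_num
      nlinarith [Real.rpow_nonneg (by norm_num : (0:ℝ) ≤ 2) ((3:ℝ)/2)]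
    refine h32.trans ?_
    exact Real.logb_le_logb_of_le one_lt_two (by norm_num) (by exact_mod_cast hn)
  set r := Real.sqrt (2 * (s : ℝ)) with hrdef
  have hr0 : 0 ≤ r := Real.sqrt_nonneg _
  have hr2 : r ^ 2 = 2 * (s : ℝ) := by
    rw [hrdef, Real.sq_sqrt (by positivity)]
  have ha0 : (0 : ℝ) ≤ 3 * L + r := by linarith
  have htR : 3 * L + r ≤ (t : ℝ) := by
    rw [ht]
    have h1 : ((⌈3 * L + r⌉.toNat : ℤ) : ℝ) = ((⌈3 * L + r⌉ : ℤ) : ℝ) := by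
      rw [Int.toNat_of_nonneg (Int.ceil_nonneg (by exact_mod_cast ha0))]
    calc 3 * L + r ≤ ((⌈3 * L + r⌉ : ℤ) : ℝ) := Int.le_ceil _
      _ = _ := by rw [← h1]; push_cast; ring
  have ht1 : 1 ≤ t := by
    rcases Nat.eq_zero_or_pos t with h | h
    · exfalso
      rw [h] at htR
      norm_num at htR
      linarith
    · exact h
  -- the key exponent inequality
  have hq : (1 : ℝ) + s + t * L ≤ (t.choose 2 : ℝ) := by
    obtain ⟨m, rfl⟩ : ∃ m, t = m + 1 := ⟨t - 1, (Nat.succ_pred_eq_of_pos ht1).symm⟩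
    have h2 : (2 : ℝ) * ((m + 1).choose 2 : ℝ) = (m + 1 : ℝ) * m := by
      exact_mod_cast congrArg (Nat.cast : ℕ → ℝ) (two_mul_choose_two m)
    have hT : ((m + 1 : ℕ) : ℝ) = (m : ℝ) + 1 := by push_cast; ring
    rw [hT] at htR ⊢
    nlinarith [htR, hL, hr0, hr2, mul_nonneg hr0 (by linarith : (0:ℝ) ≤ 4 * L - 1),
      mul_nonneg (by linarith : (0:ℝ) ≤ (m:ℝ) + 1 - (3 * L + r))
        (by linarith : (0:ℝ) ≤ (m:ℝ) + 1 + (3 * L + r) - 1 - 2 * L)]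
  by_cases htn : t ≤ n
  · have hqm : t.choose 2 ≤ n.choose 2 := Nat.choose_le_choose 2 htn
    have hpow : (2 : ℝ) ^ (n.choose 2 - t.choose 2) * 2 ^ (t.choose 2) = 2 ^ (n.choose 2) := by
      rw [← pow_add, Nat.sub_add_cancel hqm]
    have hstep1 : (Nat.card B : ℝ) / 2 ^ (n.choose 2) ≤
        2 * (n.choose t : ℝ) / 2 ^ (t.choose 2) := by
      rw [div_le_div_iff₀ (by positivity) (by positivity)]
      calc (Nat.card B : ℝ) * 2 ^ (t.choose 2)
          ≤ ((n.choose t * (2 * 2 ^ (n.choose 2 - t.choose 2)) : ℕ) : ℝ) * 2 ^ (t.choose 2) := by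
            gcongr
        _ = 2 * (n.choose t : ℝ) *
              ((2:ℝ) ^ (n.choose 2 - t.choose 2) * 2 ^ (t.choose 2)) := by push_cast; ring
        _ = 2 * (n.choose t : ℝ) * 2 ^ (n.choose 2) := by rw [hpow]
    refine hstep1.trans ?_
    rw [div_le_iff₀ (by positivity)]
    have hc : ((n.choose t : ℕ) : ℝ) ≤ (n : ℝ) ^ t := by
      exact_mod_cast Nat.choose_le_pow n t
    have hn2 : (n : ℝ) = (2 : ℝ) ^ L := (Real.rpow_logb two_pos (by norm_num) hn0).symm
    have hnt : (n : ℝ) ^ t = (2 : ℝ) ^ (L * (t : ℝ)) := by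
      rw [hn2, ← Real.rpow_natCast ((2:ℝ) ^ L) t, ← Real.rpow_mul (le_of_lt two_pos)]
    calc (2 : ℝ) * (n.choose t : ℝ) ≤ 2 * (2 : ℝ) ^ (L * (t : ℝ)) := by
          have := hc.trans_eq hnt
          nlinarith
      _ = (2 : ℝ) ^ ((1 : ℝ) + L * (t : ℝ)) := by
          rw [Real.rpow_add two_pos, Real.rpow_one]
      _ ≤ (2 : ℝ) ^ (-(s : ℝ) + (t.choose 2 : ℝ)) := by
          apply (Real.rpow_le_rpow_left_iff one_lt_two).2
          have hcomm : (t : ℝ) * L = L * (t : ℝ) := mul_comm _ _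
          linarith [hq, hcomm]
      _ = (2 : ℝ) ^ (-(s : ℝ)) * 2 ^ (t.choose 2) := by
          rw [Real.rpow_add two_pos, Real.rpow_natCast]
  · push_neg at htn
    have h0 : n.choose t = 0 := Nat.choose_eq_zero_of_lt htn
    rw [h0] at hcard
    simp only [Nat.zero_mul, Nat.le_zero] at hcard
    rw [hcard]
    simp only [Nat.cast_zero, zero_div]
    positivity
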